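/- Let B be a block configuration in 𝔽₂^d and P := CTP[B]. If the number of extreme points (vertices) of P is not a power of two (i.e., there is no k ∈ ℕ with |extreme points of P| = 2^k), then every pair of vertices of P is contained in a common proper exposed face of P: for all extreme points v, w of P there exist a linear functional c on ℝ^B and β ∈ ℝ such that c·x ≥ β for all x ∈ P, the face F := {x ∈ P : c·x = β} satisfies F ≠ P, and v ∈ F and w ∈ F. -/
import Mathlib


open scoped Classical

/-- The field `𝔽₂^d`, represented as functions `Fin d → ZMod 2`. -/
abbrev F2 (d : ℕ) : Type := Fin d → ZMod 2

/-- A cyclic transversal of a block configuration `B`. -/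
def IsCyclicTransversal {d n : ℕ} (B : Fin n → Set (F2 d)) (ξ : Fin n → F2 d) : Prop :=
  (∀ i, ξ i ∈ B i) ∧ (∑ i, ξ i) = 0

/-- The incidence vector of a transversal. -/
noncomputable def incVec {d n : ℕ} (ξ : Fin n → F2 d) : Fin n → F2 d → ℝ :=
  fun i ω => if ξ i = ω then 1 else 0

/-- The cyclic transversal polytope of a block configuration. -/
noncomputable def CTP {d n : ℕ} (B : Fin n → Set (F2 d)) : Set (Fin n → F2 d → ℝ) :=
  convexHull ℝ (incVec '' { ξ | IsCyclicTransversal B ξ })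

/-- The transversal polytope of a block configuration. -/
def TP {d n : ℕ} (B : Fin n → Set (F2 d)) : Set (Fin n → F2 d → ℝ) :=
  { x | (∀ i ω, 0 ≤ x i ω) ∧ (∀ i ω, ω ∉ B i → x i ω = 0) ∧ ∀ i, (∑ ω : F2 d, x i ω) = 1 }

/-- The size of a block configuration. -/
noncomputable def blockSize {d n : ℕ} (B : Fin n → Set (F2 d)) : ℕ := ∑ i, (B i).ncard

/-- The rank of a block configuration. -/
noncomputable def blockRank {d n : ℕ} (B : Fin n → Set (F2 d)) : ℕ :=
  Module.finrank (ZMod 2) (Submodule.span (ZMod 2) (⋃ i, B i))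

/-- Two sets of real vectors are affinely isomorphic. -/
def AffIso {α β : Type*} [AddCommGroup α] [Module ℝ α] [AddCommGroup β] [Module ℝ β]
    (P : Set α) (Q : Set β) : Prop :=
  ∃ f : α →ᵃ[ℝ] β, Set.InjOn f P ∧ f '' P = Q

/-- The left-hand side of the lifted odd-set (LOS) inequality associated with `η` and `I`. -/
noncomputable def losLHS {d n : ℕ} (B : Fin n → Set (F2 d)) (η : F2 d) (I : Finset (Fin n))
    (x : Fin n → F2 d → ℝ) : ℝ :=
  (∑ i ∈ I, ∑ ω ∈ Finset.univ.filter (fun ω : F2 d => ω ∈ B i ∧ (∑ j, η j * ω j) = 0), x i ω) +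
  (∑ i ∈ Iᶜ, ∑ ω ∈ Finset.univ.filter (fun ω : F2 d => ω ∈ B i ∧ (∑ j, η j * ω j) = 1), x i ω)

section Aux
variable {d n : ℕ}

lemma incVec_inj : Function.Injective (incVec (d := d) (n := n)) := by
  intro a b h
  funext i
  have h1 := congrFun (congrFun h i) (b i)
  simp only [incVec] at h1
  by_contra hne
  simp [hne] at h1

lemma CTP_mem_Icc (B : Fin n → Set (F2 d)) {x} (hx : x ∈ CTP B) (i : Fin n) (ω : F2 d) :
    x i ω ∈ Set.Icc (0:ℝ) 1 := by
  have hconv : Convex ℝ {y : Fin n → F2 d → ℝ | ∀ i ω, y i ω ∈ Set.Icc (0:ℝ) 1} := by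
    intro a ha b hb s t hs ht hst
    intro i ω
    have h1 := ha i ω; have h2 := hb i ω
    have hco : (s • a + t • b) i ω = s * a i ω + t * b i ω := by
      simp [smul_eq_mul]
    constructor
    · rw [hco]; nlinarith [h1.1, h1.2, h2.1, h2.2]
    · rw [hco]; nlinarith [h1.1, h1.2, h2.1, h2.2]
  have hsub : CTP B ⊆ {y : Fin n → F2 d → ℝ | ∀ i ω, y i ω ∈ Set.Icc (0:ℝ) 1} := by
    refine convexHull_min ?_ hconv
    rintro y ⟨χ, -, rfl⟩ i ω
    unfold incVec
    split <;> norm_num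
  exact hsub hx i ω

lemma incVec_extreme (B : Fin n → Set (F2 d)) {ξ : Fin n → F2 d}
    (hξ : IsCyclicTransversal B ξ) :
    incVec ξ ∈ Set.extremePoints ℝ (CTP B) := by
  rw [mem_extremePoints]
  refine ⟨subset_convexHull ℝ _ ⟨ξ, hξ, rfl⟩, ?_⟩
  intro a ha b hb hseg
  obtain ⟨s, t, hs, ht, hst, heq⟩ := hseg
  have key : ∀ i ω, a i ω = incVec ξ i ω ∧ b i ω = incVec ξ i ω := by
    intro i ω
    have hco : s * a i ω + t * b i ω = incVec ξ i ω := by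
      have := congrFun (congrFun heq i) ω
      simpa [smul_eq_mul] using this
    have h1 := CTP_mem_Icc B ha i ω
    have h2 := CTP_mem_Icc B hb i ω
    unfold incVec at hco ⊢
    by_cases h : ξ i = ω
    · rw [if_pos h] at hco ⊢
      constructor <;> nlinarith [h1.1, h1.2, h2.1, h2.2]
    · rw [if_neg h] at hco ⊢
      constructor <;> nlinarith [h1.1, h1.2, h2.1, h2.2]
  exact ⟨funext fun i => funext fun ω => (key i ω).1,
    funext fun i => funext fun ω => (key i ω).2⟩

end Aux


lemma T_card_pow (B : Fin n → Set (F2 d)) (ξ ζ : Fin n → F2 d)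
    (hξ : IsCyclicTransversal B ξ) (hζ : IsCyclicTransversal B ζ)
    (hall : ∀ χ, IsCyclicTransversal B χ → ∀ i, χ i = ξ i ∨ χ i = ζ i) :
    ∃ k, {χ | IsCyclicTransversal B χ}.ncard = 2 ^ k := by
  have h2 : ∀ a : ZMod 2, a + a = 0 := by decide
  have h01 : ∀ a : ZMod 2, a = 0 ∨ a = 1 := by decide
  have hzz : ∀ v : F2 d, v + v = 0 := fun v => funext fun j => h2 _
  set δ : Fin n → F2 d := fun i => ξ i + ζ i with hδ
  let ψ : (Fin n → ZMod 2) →ₗ[ZMod 2] (Fin n → F2 d) :=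
    { toFun := fun s => fun i => s i • δ i
      map_add' := by intro s s'; funext i; simp [add_smul]
      map_smul' := by intro c s; funext i; simp [mul_smul] }
  let sumCoords : (Fin n → F2 d) →ₗ[ZMod 2] F2 d := ∑ i, LinearMap.proj i
  have hsc : ∀ y : Fin n → F2 d, sumCoords y = ∑ i, y i := by
    intro y; simp [sumCoords, LinearMap.sum_apply, LinearMap.proj_apply]
  let W : Submodule (ZMod 2) (Fin n → F2 d) :=
    Submodule.map ψ (LinearMap.ker (sumCoords ∘ₗ ψ))
  have hset : {χ | IsCyclicTransversal B χ} = (fun y => ζ + y) '' (W : Set (Fin n → F2 d)) := by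
    ext χ
    constructor
    · intro hχ
      set s : Fin n → ZMod 2 := fun i => if χ i = ζ i then 0 else 1 with hs
      have hψs : ψ s = fun i => χ i + ζ i := by
        funext i
        by_cases h : χ i = ζ i
        · show s i • δ i = χ i + ζ i
          rw [h, hzz (ζ i)]
          simp [hs, h]
        · have hxi : χ i = ξ i := (hall χ hχ i).resolve_right h
          show s i • δ i = χ i + ζ i
          have hs1 : s i = 1 := if_neg h
          rw [hs1, one_smul, hxi]
      refine ⟨ψ s, ⟨s, ?_, rfl⟩, ?_⟩
      · simp only [SetLike.mem_coe, LinearMap.mem_ker, LinearMap.comp_apply]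
        rw [hsc, hψs]
        have : ∑ i, (χ i + ζ i) = (∑ i, χ i) + ∑ i, ζ i := Finset.sum_add_distrib
        rw [this, hχ.2, hζ.2, add_zero]
      · rw [hψs]
        funext i
        show ζ i + (χ i + ζ i) = χ i
        have : ζ i + (χ i + ζ i) = χ i + (ζ i + ζ i) := by abel
        rw [this, hzz, add_zero]
    · rintro ⟨y, ⟨s, hsker, rfl⟩, rfl⟩
      constructor
      · intro i
        show ζ i + s i • δ i ∈ B i
        rcases h01 (s i) with h | h
        · rw [h, zero_smul, add_zero]; exact hζ.1 i
        · rw [h, one_smul, hδ]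
          have : ζ i + (ξ i + ζ i) = ξ i + (ζ i + ζ i) := by abel
          rw [this, hzz, add_zero]; exact hξ.1 i
      · have hker : sumCoords (ψ s) = 0 := by
          simpa [LinearMap.mem_ker] using hsker
        have : ∑ i, (ζ i + ψ s i) = (∑ i, ζ i) + ∑ i, ψ s i := Finset.sum_add_distrib
        show ∑ i, (ζ + ψ s) i = 0
        simp only [Pi.add_apply]
        rw [this, hζ.2, zero_add, ← hsc, hker]
  rw [hset, Set.ncard_image_of_injective _ (add_right_injective ζ)]
  haveI : Fintype ↥W := Fintype.ofFinite _
  refine ⟨Module.finrank (ZMod 2) ↥W, ?_⟩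
  have h1 : (W : Set (Fin n → F2 d)).ncard = Nat.card ↥W :=
    (Nat.card_coe_set_eq _).symm
  rw [h1, Nat.card_eq_fintype_card, Module.card_eq_pow_finrank (K := ZMod 2), ZMod.card]

/-- if the number of vertices of a CTP is not a power of two, then every
pair of vertices lies in a common proper exposed face. -/
theorem statement4 (d n : ℕ) (hn : 2 ≤ n) (B : Fin n → Set (F2 d)) (hB : ∀ i, (B i).Nonempty)
    (hcard : ¬ ∃ k : ℕ, (Set.extremePoints ℝ (CTP B)).ncard = 2 ^ k) :
    ∀ v ∈ Set.extremePoints ℝ (CTP B), ∀ w ∈ Set.extremePoints ℝ (CTP B),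
      ∃ (c : (Fin n → F2 d → ℝ) →ₗ[ℝ] ℝ) (β : ℝ),
        (∀ x ∈ CTP B, β ≤ c x) ∧
        { x ∈ CTP B | c x = β } ≠ CTP B ∧
        c v = β ∧ c w = β := by
  intro v hv w hw
  have hvT : v ∈ incVec '' {χ | IsCyclicTransversal B χ} :=
    extremePoints_convexHull_subset hv
  have hwT : w ∈ incVec '' {χ | IsCyclicTransversal B χ} :=
    extremePoints_convexHull_subset hw
  obtain ⟨ξ, hξ, rfl⟩ := hvT
  obtain ⟨ζ, hζ, rfl⟩ := hwT
  have hinc01 : ∀ (χ : Fin n → F2 d) i ω, incVec χ i ω = 0 ∨ incVec χ i ω = 1 := by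
    intro χ i ω; unfold incVec; split
    · right; rfl
    · left; rfl
  set bad : Fin n → Finset (F2 d) :=
    fun i => Finset.univ.filter (fun ω => ω ≠ ξ i ∧ ω ≠ ζ i) with hbad
  refine ⟨{ toFun := fun y => ∑ i, ∑ ω ∈ bad i, y i ω
            map_add' := by intro y z; simp [Finset.sum_add_distrib]
            map_smul' := by intro r y; simp [Finset.mul_sum] }, 0, ?_, ?_, ?_, ?_⟩
  · intro x hx
    show (0:ℝ) ≤ ∑ i, ∑ ω ∈ bad i, x i ω
    exact Finset.sum_nonneg fun i _ => Finset.sum_nonneg fun ω _ => (CTP_mem_Icc B hx i ω).1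
  · intro hF
    apply hcard
    have hforall : ∀ χ, IsCyclicTransversal B χ → ∀ i, χ i = ξ i ∨ χ i = ζ i := by
      intro χ hχ i
      have hmem : incVec χ ∈ CTP B := subset_convexHull ℝ _ ⟨χ, hχ, rfl⟩
      have hz : ∑ i, ∑ ω ∈ bad i, incVec χ i ω = 0 := by
        have hm2 : incVec χ ∈ {x ∈ CTP B | (∑ i, ∑ ω ∈ bad i, x i ω) = 0} := by
          rw [show {x ∈ CTP B | (∑ i, ∑ ω ∈ bad i, x i ω) = 0} = CTP B from hF]
          exact hmem
        exact hm2.2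
      by_contra hcon
      push_neg at hcon
      have hmemf : χ i ∈ bad i := by
        rw [hbad]; simp [hcon.1, hcon.2]
      have hnonneg : ∀ (j : Fin n) ω, (0:ℝ) ≤ incVec χ j ω := by
        intro j ω; rcases hinc01 χ j ω with h | h <;> rw [h] <;> norm_num
      have h1 : (1:ℝ) ≤ ∑ ω ∈ bad i, incVec χ i ω := by
        have : incVec χ i (χ i) = 1 := by simp [incVec]
        calc (1:ℝ) = incVec χ i (χ i) := this.symm
          _ ≤ ∑ ω ∈ bad i, incVec χ i ω :=
            Finset.single_le_sum (fun ω _ => hnonneg i ω) hmemf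
      have h2 : ∑ ω ∈ bad i, incVec χ i ω ≤ ∑ j, ∑ ω ∈ bad j, incVec χ j ω :=
        Finset.single_le_sum (fun j _ => Finset.sum_nonneg fun ω _ => hnonneg j ω)
          (Finset.mem_univ i)
      linarith
    obtain ⟨k, hk⟩ := T_card_pow B ξ ζ hξ hζ hforall
    have hEP : Set.extremePoints ℝ (CTP B) = incVec '' {χ | IsCyclicTransversal B χ} := by
      apply Set.Subset.antisymm
      · exact extremePoints_convexHull_subset
      · rintro x ⟨χ, hχ, rfl⟩
        exact incVec_extreme B hχ
    refine ⟨k, ?_⟩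
    rw [hEP, Set.ncard_image_of_injective _ incVec_inj, hk]
  · show ∑ i, ∑ ω ∈ bad i, incVec ξ i ω = 0
    refine Finset.sum_eq_zero fun i _ => Finset.sum_eq_zero fun ω hω => ?_
    rw [hbad] at hω
    simp only [Finset.mem_filter, Finset.mem_univ, true_and] at hω
    unfold incVec
    exact if_neg fun h => hω.1 h.symm
  · show ∑ i, ∑ ω ∈ bad i, incVec ζ i ω = 0
    refine Finset.sum_eq_zero fun i _ => Finset.sum_eq_zero fun ω hω => ?_
    rw [hbad] at hω
    simp only [Finset.mem_filter, Finset.mem_univ, true_and] at hω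
    unfold incVec
    exact if_neg fun h => hω.2 h.symm
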